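/- arXiv:1803.04660 — 6 statements merged into one kernel-verified Lean document; each statement's English description precedes it below -/
import Mathlib

section
/- Let G be a finite connected simple graph. Define a binary relation ⪯ on the vertex set by u ⪯ x if and only if e(u) = d(u,x) + e(x) (x is a tight upper certificate for u). Then ⪯ is a partial order: it is reflexive, antisymmetric, and transitive. -/
/-- The eccentricity of a vertex `u`: the maximum shortest-path distance from `u`. -/
noncomputable def graphEcc {V : Type*} [Fintype V] (G : SimpleGraph V) (u : V) : ℕ :=
  Finset.univ.sup (G.dist u)

lemma graphEcc_le {V : Type*} [Fintype V] (G : SimpleGraph V) (hG : G.Connected) (u y : V) :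
    graphEcc G u ≤ G.dist u y + graphEcc G y := by
  apply Finset.sup_le
  intro v _
  calc G.dist u v ≤ G.dist u y + G.dist y v := hG.dist_triangle
    _ ≤ G.dist u y + graphEcc G y := by
        exact Nat.add_le_add_left (Finset.le_sup (Finset.mem_univ v)) _

theorem tightUpperCertificate_partialOrder {V : Type*} [Fintype V] (G : SimpleGraph V)
    (hG : G.Connected) :
    (∀ u : V, graphEcc G u = G.dist u u + graphEcc G u) ∧
    (∀ u x : V, graphEcc G u = G.dist u x + graphEcc G x →
      graphEcc G x = G.dist x u + graphEcc G u → u = x) ∧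
    (∀ u x y : V, graphEcc G u = G.dist u x + graphEcc G x →
      graphEcc G x = G.dist x y + graphEcc G y →
      graphEcc G u = G.dist u y + graphEcc G y) := by
  refine ⟨fun u => by simp, fun u x h1 h2 => ?_, fun u x y h1 h2 => ?_⟩
  · have : G.dist u x = 0 := by omega
    exact hG.dist_eq_zero_iff.mp this
  · have hle : graphEcc G u ≤ G.dist u y + graphEcc G y := graphEcc_le G hG u y
    have htri : G.dist u y ≤ G.dist u x + G.dist x y := hG.dist_triangle
    omega
end

section
/- Let G be a finite connected simple graph, let U be a nonempty set of vertices, and set e^U(u) = min_{x ∈ U} (d(u,x) + e(x)). For any vertex u and any vertex x that is a tight upper certificate for u (i.e., e(u) = d(u,x) + e(x)), one has e^U(u) − e(u) ≤ 2·d(x,U), where d(x,U) = min_{y ∈ U} d(x,y). -/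
theorem upper_certificate_error {V : Type*} [Fintype V] (G : SimpleGraph V)
    (hG : G.Connected) (U : Finset V) (hU : U.Nonempty) (u x : V)
    (hx : graphEcc G u = G.dist u x + graphEcc G x) :
    (U.inf' hU (fun y => G.dist u y + graphEcc G y) : ℤ) - (graphEcc G u : ℤ) ≤
      2 * (U.inf' hU (fun y => G.dist x y) : ℤ) := by
  obtain ⟨y, hyU, hy⟩ := Finset.exists_mem_eq_inf' hU (fun y => G.dist x y)
  have hecc : graphEcc G y ≤ G.dist y x + graphEcc G x := by
    apply Finset.sup_le
    intro v _
    calc G.dist y v ≤ G.dist y x + G.dist x v := hG.dist_triangle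
      _ ≤ G.dist y x + graphEcc G x := by
          exact Nat.add_le_add_left (Finset.le_sup (Finset.mem_univ v)) _
  have h1 : U.inf' hU (fun y => G.dist u y + graphEcc G y) ≤ G.dist u y + graphEcc G y :=
    Finset.inf'_le _ hyU
  have h2 : G.dist u y ≤ G.dist u x + G.dist x y := hG.dist_triangle
  have h3 : G.dist y x = G.dist x y := G.dist_comm
  have := h1.trans (Nat.add_le_add h2 hecc)
  rw [h3] at this
  have hfin : U.inf' hU (fun y => G.dist u y + graphEcc G y) ≤
      graphEcc G u + 2 * G.dist x y := by omega
  have : (U.inf' hU (fun y => G.dist u y + graphEcc G y) : ℤ) ≤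
      (graphEcc G u : ℤ) + 2 * (G.dist x y : ℤ) := by exact_mod_cast hfin
  have g1 : (U.inf' hU fun y => (G.dist x y : ℤ)) = (G.dist x y : ℤ) := by
    apply le_antisymm (Finset.inf'_le _ hyU)
    apply Finset.le_inf'
    intro b hb
    have : G.dist x y ≤ G.dist x b := hy ▸ Finset.inf'_le _ hb
    exact_mod_cast this
  have f1 : (U.inf' hU fun y => (G.dist u y : ℤ) + (graphEcc G y : ℤ)) ≤
      (G.dist u y : ℤ) + (graphEcc G y : ℤ) := Finset.inf'_le _ hyU
  rw [g1]
  omega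
end

section
/- Let G be a finite connected δ-hyperbolic simple graph. Then diam(G) ≥ 2·rad(G) − 4δ − 1. -/
/-- The radius: the minimum eccentricity. -/
noncomputable def graphRad {V : Type*} [Fintype V] [Nonempty V] (G : SimpleGraph V) : ℕ :=
  Finset.univ.inf' Finset.univ_nonempty (graphEcc G)

/-- The diameter: the maximum eccentricity. -/
noncomputable def graphDiam {V : Type*} [Fintype V] (G : SimpleGraph V) : ℕ :=
  Finset.univ.sup (graphEcc G)


/-- `G` is `δ`-hyperbolic: for any four vertices, the two larger of the three distance sums
differ by at most `2δ` (four-point condition). -/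
def IsHyperbolic {V : Type*} (G : SimpleGraph V) (δ : ℝ) : Prop :=
  ∀ u v x y : V,
    (G.dist u v : ℝ) + (G.dist x y : ℝ) ≤
      max ((G.dist u x : ℝ) + (G.dist v y : ℝ)) ((G.dist u y : ℝ) + (G.dist v x : ℝ)) + 2 * δ

private lemma dist_getVert_le {V : Type*} {G : SimpleGraph V} (hG : G.Connected) {u v : V}
    (p : G.Walk u v) (k : ℕ) : G.dist u (p.getVert k) ≤ k := by
  induction p generalizing k with
  | nil => simp [SimpleGraph.Walk.getVert, SimpleGraph.dist_self]
  | @cons a b w h q ih =>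
    cases k with
    | zero => simp [SimpleGraph.Walk.getVert, SimpleGraph.dist_self]
    | succ n =>
      rw [SimpleGraph.Walk.getVert_cons_succ]
      calc G.dist a (q.getVert n) ≤ G.dist a b + G.dist b (q.getVert n) := hG.dist_triangle
        _ ≤ 1 + n := by
            gcongr
            · exact (G.dist_le h.toWalk).trans (by simp)
            · exact ih n
        _ = n + 1 := by omega

private lemma getVert_dist_le {V : Type*} {G : SimpleGraph V} (hG : G.Connected) {u v : V}
    (p : G.Walk u v) {k : ℕ} (hk : k ≤ p.length) :
    G.dist (p.getVert k) v ≤ p.length - k := by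
  have := dist_getVert_le hG p.reverse (p.length - k)
  rw [SimpleGraph.Walk.getVert_reverse] at this
  have h2 : p.length - (p.length - k) = k := by omega
  rw [h2] at this
  calc G.dist (p.getVert k) v = G.dist v (p.getVert k) := SimpleGraph.dist_comm
    _ ≤ p.length - k := this

theorem hyperbolic_diam_ge_two_rad {V : Type*} [Fintype V] [Nonempty V] (G : SimpleGraph V)
    (hG : G.Connected) (δ : ℝ) (hδ : 0 ≤ δ) (hyp : IsHyperbolic G δ) :
    (graphDiam G : ℝ) ≥ 2 * (graphRad G : ℝ) - 4 * δ - 1 := by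
  -- every distance is at most the diameter
  have hbd : ∀ a b : V, G.dist a b ≤ graphDiam G := fun a b =>
    le_trans (Finset.le_sup (f := G.dist a) (Finset.mem_univ b))
      (Finset.le_sup (f := graphEcc G) (Finset.mem_univ a))
  -- pick x achieving the diameter, and y achieving ecc x
  obtain ⟨x, -, hx⟩ := Finset.exists_mem_eq_sup Finset.univ Finset.univ_nonempty (graphEcc G)
  obtain ⟨y, -, hy⟩ := Finset.exists_mem_eq_sup Finset.univ Finset.univ_nonempty (G.dist x)
  have hxy : G.dist x y = graphDiam G := by
    unfold graphDiam
    rw [hx]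
    unfold graphEcc
    rw [← hy]
  set D := graphDiam G with hD
  obtain ⟨p, hp⟩ := hG.exists_walk_length_eq_dist x y
  rw [hxy] at hp
  set k : ℕ := (D + 1) / 2 with hk
  have hkD : k ≤ D := by omega
  set c : V := p.getVert k with hc
  have hxc : G.dist x c ≤ k := dist_getVert_le hG p k
  have hcy : G.dist c y ≤ D - k := by
    have := getVert_dist_le hG p (k := k) (by omega : k ≤ p.length)
    rw [hp] at this
    exact this
  have hyc : G.dist y c ≤ k := by
    rw [G.dist_comm]; omega
  -- eccentricity bound for c
  have hecc : ∀ w : V, (G.dist c w : ℝ) ≤ (k : ℝ) + 2 * δ := by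
    intro w
    have h4 := hyp x y c w
    have h1 : (G.dist x c : ℝ) + (G.dist y w : ℝ) ≤ (k : ℝ) + (D : ℝ) := by
      have := hbd y w
      push_cast
      have : (G.dist x c : ℝ) ≤ k := by exact_mod_cast hxc
      have : (G.dist y w : ℝ) ≤ D := by exact_mod_cast hbd y w
      linarith [show (G.dist x c : ℝ) ≤ k from by exact_mod_cast hxc]
    have h2 : (G.dist x w : ℝ) + (G.dist y c : ℝ) ≤ (k : ℝ) + (D : ℝ) := by
      have h5 : (G.dist x w : ℝ) ≤ D := by exact_mod_cast hbd x w
      have h6 : (G.dist y c : ℝ) ≤ k := by exact_mod_cast hyc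
      linarith
    have hmax : max ((G.dist x c : ℝ) + (G.dist y w : ℝ))
        ((G.dist x w : ℝ) + (G.dist y c : ℝ)) ≤ (k : ℝ) + (D : ℝ) :=
      max_le h1 h2
    have hDxy : (G.dist x y : ℝ) = D := by exact_mod_cast hxy
    linarith [h4.trans (by linarith : max ((G.dist x c : ℝ) + (G.dist y w : ℝ))
        ((G.dist x w : ℝ) + (G.dist y c : ℝ)) + 2 * δ ≤ (k : ℝ) + (D : ℝ) + 2 * δ)]
  -- radius bound
  obtain ⟨w0, -, hw0⟩ := Finset.exists_mem_eq_sup Finset.univ Finset.univ_nonempty (G.dist c)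
  have hrad : (graphRad G : ℝ) ≤ (k : ℝ) + 2 * δ := by
    have h1 : graphRad G ≤ graphEcc G c :=
      Finset.inf'_le (graphEcc G) (Finset.mem_univ c)
    have h2 : (graphEcc G c : ℝ) ≤ (k : ℝ) + 2 * δ := by
      unfold graphEcc
      rw [hw0]
      exact hecc w0
    exact le_trans (by exact_mod_cast h1) h2
  have hk2 : (2 : ℝ) * (k : ℝ) ≤ (D : ℝ) + 1 := by
    have : 2 * k ≤ D + 1 := by omega
    exact_mod_cast this
  linarith
end

section
/- Let G be a finite connected δ-hyperbolic simple graph. For every two vertices c and v such that v is furthest from c (i.e., d(c,v) = e(c)), one has e(v) ≥ diam(G) − 2δ, and consequently e(v) ≥ 2·rad(G) − 6δ − 1. -/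
lemma walk_split {V : Type*} {G : SimpleGraph V} :
    ∀ {u y : V} (p : G.Walk u y) (n : ℕ),
      (∃ q : G.Walk u (p.getVert n), q.length ≤ n) ∧
      (∃ r : G.Walk (p.getVert n) y, r.length ≤ p.length - n) := by
  intro u y p
  induction p with
  | nil => intro n; exact ⟨⟨.nil, Nat.zero_le _⟩, ⟨.nil, Nat.zero_le _⟩⟩
  | @cons a b c h q ih =>
    intro n
    cases n with
    | zero =>
      refine ⟨⟨.nil, le_rfl⟩, ⟨(q.cons h).copy (SimpleGraph.Walk.getVert_zero _).symm rfl, ?_⟩⟩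
      simp
    | succ n =>
      obtain ⟨⟨q1, hq1⟩, ⟨r1, hr1⟩⟩ := ih n
      refine ⟨⟨(q1.cons h).copy rfl rfl, ?_⟩, ⟨r1.copy rfl rfl, ?_⟩⟩
      · simpa using Nat.succ_le_succ hq1
      · simpa using hr1

lemma dist_le_ecc {V : Type*} [Fintype V] (G : SimpleGraph V) (u w : V) :
    G.dist u w ≤ graphEcc G u :=
  Finset.le_sup (Finset.mem_univ w)

lemma ecc_le_diam {V : Type*} [Fintype V] (G : SimpleGraph V) (u : V) :
    graphEcc G u ≤ graphDiam G :=
  Finset.le_sup (Finset.mem_univ u)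

theorem hyperbolic_furthest_ecc {V : Type*} [Fintype V] [Nonempty V] (G : SimpleGraph V)
    (hG : G.Connected) (δ : ℝ) (hδ : 0 ≤ δ) (hyp : IsHyperbolic G δ)
    (c v : V) (hv : G.dist c v = graphEcc G c) :
    (graphEcc G v : ℝ) ≥ (graphDiam G : ℝ) - 2 * δ ∧
    (graphEcc G v : ℝ) ≥ 2 * (graphRad G : ℝ) - 6 * δ - 1 := by
  -- obtain a diametral pair u, y
  obtain ⟨u, -, hu⟩ := Finset.exists_mem_eq_sup (Finset.univ : Finset V)
    Finset.univ_nonempty (graphEcc G)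
  obtain ⟨y, -, hy⟩ := Finset.exists_mem_eq_sup (Finset.univ : Finset V)
    Finset.univ_nonempty (G.dist u)
  have hDuy : G.dist u y = graphDiam G := by
    rw [graphDiam, hu, graphEcc, ← hy]
  set D : ℕ := graphDiam G with hD
  -- Part 1 : e(v) ≥ D - 2δ
  have part1 : (graphEcc G v : ℝ) ≥ (D : ℝ) - 2 * δ := by
    have h4 := hyp u y c v
    have h1 : (G.dist u c : ℝ) ≤ (G.dist c v : ℝ) := by
      rw [SimpleGraph.dist_comm]
      exact_mod_cast hv ▸ dist_le_ecc G c u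
    have h2 : (G.dist y v : ℝ) ≤ (graphEcc G v : ℝ) := by
      rw [SimpleGraph.dist_comm]
      exact_mod_cast dist_le_ecc G v y
    have h3 : (G.dist u v : ℝ) ≤ (graphEcc G v : ℝ) := by
      rw [SimpleGraph.dist_comm]
      exact_mod_cast dist_le_ecc G v u
    have h5 : (G.dist y c : ℝ) ≤ (G.dist c v : ℝ) := by
      rw [SimpleGraph.dist_comm]
      exact_mod_cast hv ▸ dist_le_ecc G c y
    have hmax : max ((G.dist u c : ℝ) + (G.dist y v : ℝ)) ((G.dist u v : ℝ) + (G.dist y c : ℝ))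
        ≤ (G.dist c v : ℝ) + (graphEcc G v : ℝ) := by
      apply max_le <;> linarith
    have hDle : (D : ℝ) ≤ (G.dist u y : ℝ) := by rw [hDuy]
    linarith
  refine ⟨part1, ?_⟩
  -- Part 2 : 2 * rad ≤ D + 1 + 4δ
  obtain ⟨p, hp⟩ := hG.exists_walk_length_eq_dist u y
  set k : ℕ := D / 2 with hk
  set m : V := p.getVert k with hm
  obtain ⟨⟨q1, hq1⟩, ⟨r1, hr1⟩⟩ := walk_split p k
  have hkD : k ≤ D := Nat.div_le_self D 2
  have hum : G.dist u m ≤ k := le_trans (SimpleGraph.dist_le q1) hq1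
  have hmy : G.dist m y ≤ D - k := by
    refine le_trans (SimpleGraph.dist_le r1) ?_
    rw [hp, hDuy] at hr1
    exact hr1
  -- e(m) ≤ (D+1)/2 + 2δ
  have hem : (graphEcc G m : ℝ) ≤ ((D : ℝ) + 1) / 2 + 2 * δ := by
    obtain ⟨w, -, hw⟩ := Finset.exists_mem_eq_sup (Finset.univ : Finset V)
      Finset.univ_nonempty (G.dist m)
    rw [graphEcc, hw]
    have h4 := hyp u y w m
    have hDle : (D : ℝ) ≤ (G.dist u y : ℝ) := by rw [hDuy]
    have huw : (G.dist u w : ℝ) ≤ (D : ℝ) := by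
      exact_mod_cast le_trans (dist_le_ecc G u w) (ecc_le_diam G u)
    have hyw : (G.dist y w : ℝ) ≤ (D : ℝ) := by
      exact_mod_cast le_trans (dist_le_ecc G y w) (ecc_le_diam G y)
    have hym : (G.dist y m : ℝ) ≤ (D : ℝ) - (k : ℝ) := by
      rw [SimpleGraph.dist_comm]
      have : (G.dist m y : ℝ) ≤ ((D - k : ℕ) : ℝ) := by exact_mod_cast hmy
      rw [Nat.cast_sub hkD] at this
      exact this
    have humR : (G.dist u m : ℝ) ≤ (k : ℝ) := by exact_mod_cast hum
    have hwm : (G.dist w m : ℝ) = (G.dist m w : ℝ) := by rw [SimpleGraph.dist_comm]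
    have hkhalf : (k : ℝ) ≤ (D : ℝ) / 2 := by
      have h2 : (k : ℝ) * 2 ≤ (D : ℝ) := by
        exact_mod_cast Nat.div_mul_le_self D 2
      linarith
    have hDk : (D : ℝ) - (k : ℝ) ≤ ((D : ℝ) + 1) / 2 := by
      have h2 : (D : ℝ) ≤ 2 * (k : ℝ) + 1 := by
        have : D ≤ 2 * k + 1 := by rw [hk]; omega
        exact_mod_cast this
      linarith
    have hmax : max ((G.dist u w : ℝ) + (G.dist y m : ℝ)) ((G.dist u m : ℝ) + (G.dist y w : ℝ))
        ≤ (D : ℝ) + ((D : ℝ) + 1) / 2 := by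
      apply max_le
      · linarith
      · have : (k : ℝ) ≤ ((D : ℝ) + 1) / 2 := by linarith
        linarith
    linarith
  have hrad : (graphRad G : ℝ) ≤ (graphEcc G m : ℝ) := by
    exact_mod_cast Finset.inf'_le (graphEcc G) (Finset.mem_univ m)
  linarith
end

section
/- Let G be a finite connected δ-hyperbolic simple graph. Let u₁ be any vertex, let a₁ be a vertex furthest from u₁ (d(u₁,a₁) = e(u₁)), let a₂ be a vertex furthest from a₁ (d(a₁,a₂) = e(a₁)), and let u₃ be a middle vertex of a shortest (a₁,a₂)-path, i.e., d(a₁,u₃) + d(u₃,a₂) = d(a₁,a₂) and d(a₁,u₃) = ⌊d(a₁,a₂)/2⌋. Then d(a₁,a₂) ≥ diam(G) − 2δ and e(u₃) ≤ rad(G) + 3δ. -/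
theorem hyperbolic_two_sweeps {V : Type*} [Fintype V] [Nonempty V] (G : SimpleGraph V)
    (hG : G.Connected) (δ : ℝ) (hδ : 0 ≤ δ) (hyp : IsHyperbolic G δ)
    (u₁ a₁ a₂ u₃ : V)
    (ha₁ : G.dist u₁ a₁ = graphEcc G u₁)
    (ha₂ : G.dist a₁ a₂ = graphEcc G a₁)
    (hu₃ : G.dist a₁ u₃ + G.dist u₃ a₂ = G.dist a₁ a₂)
    (hmid : G.dist a₁ u₃ = G.dist a₁ a₂ / 2) :
    (G.dist a₁ a₂ : ℝ) ≥ (graphDiam G : ℝ) - 2 * δ ∧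
    (graphEcc G u₃ : ℝ) ≤ (graphRad G : ℝ) + 3 * δ := by
  classical
  -- basic facts
  have distLE : ∀ x y : V, G.dist x y ≤ graphEcc G x := fun x y =>
    Finset.le_sup (Finset.mem_univ y)
  obtain ⟨c, -, hc⟩ := Finset.exists_mem_eq_inf' (Finset.univ_nonempty (α := V)) (graphEcc G)
  have hcrad : graphRad G = graphEcc G c := hc
  have distc : ∀ x : V, G.dist c x ≤ graphRad G := fun x => by
    rw [hcrad]; exact distLE c x
  -- every distance is at most D + 2δ
  have h1 : ∀ x y : V, (G.dist x y : ℝ) ≤ (G.dist a₁ a₂ : ℝ) + 2 * δ := by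
    intro x y
    have h4 := hyp x y u₁ a₁
    have e1 : (G.dist x u₁ : ℝ) ≤ (G.dist u₁ a₁ : ℝ) := by
      exact_mod_cast ha₁ ▸ (SimpleGraph.dist_comm (u := x) (v := u₁)) ▸ distLE u₁ x
    have e2 : (G.dist y a₁ : ℝ) ≤ (G.dist a₁ a₂ : ℝ) := by
      exact_mod_cast ha₂ ▸ (SimpleGraph.dist_comm (u := y) (v := a₁)) ▸ distLE a₁ y
    have e3 : (G.dist x a₁ : ℝ) ≤ (G.dist a₁ a₂ : ℝ) := by
      exact_mod_cast ha₂ ▸ (SimpleGraph.dist_comm (u := x) (v := a₁)) ▸ distLE a₁ x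
    have e4 : (G.dist y u₁ : ℝ) ≤ (G.dist u₁ a₁ : ℝ) := by
      exact_mod_cast ha₁ ▸ (SimpleGraph.dist_comm (u := y) (v := u₁)) ▸ distLE u₁ y
    have hm : max ((G.dist x u₁ : ℝ) + (G.dist y a₁ : ℝ)) ((G.dist x a₁ : ℝ) + (G.dist y u₁ : ℝ))
        ≤ (G.dist u₁ a₁ : ℝ) + (G.dist a₁ a₂ : ℝ) := by
      apply max_le <;> linarith
    linarith
  -- part 1: diam ≤ D + 2δ
  have hdiam : (graphDiam G : ℝ) ≤ (G.dist a₁ a₂ : ℝ) + 2 * δ := by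
    obtain ⟨w, -, hw⟩ := Finset.exists_mem_eq_sup (Finset.univ (α := V))
      Finset.univ_nonempty (graphEcc G)
    obtain ⟨z, -, hz⟩ := Finset.exists_mem_eq_sup (Finset.univ (α := V))
      Finset.univ_nonempty (G.dist w)
    have : graphDiam G = G.dist w z := by rw [graphDiam, hw, graphEcc, hz]
    rw [this]; exact h1 w z
  refine ⟨by linarith, ?_⟩
  -- part 2
  set D := G.dist a₁ a₂ with hD
  set m := G.dist a₁ u₃ with hm'
  set k := G.dist u₃ a₂ with hk'
  -- D ≤ 2 * rad
  have hD2r : D ≤ 2 * graphRad G := by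
    have t1 : G.dist a₁ a₂ ≤ G.dist a₁ c + G.dist c a₂ := hG.dist_triangle
    have t2 : G.dist a₁ c ≤ graphRad G := SimpleGraph.dist_comm ▸ distc a₁
    have t3 : G.dist c a₂ ≤ graphRad G := distc a₂
    omega
  have hkrad : k ≤ graphRad G := by omega
  have hmk : m ≤ k := by omega
  have hu₃a₁ : G.dist u₃ a₁ = m := SimpleGraph.dist_comm
  -- App2 : dist u₃ c ≤ rad + 2δ - m
  have app2 : (G.dist u₃ c : ℝ) + (m : ℝ) ≤ (graphRad G : ℝ) + 2 * δ := by
    have h4 := hyp u₃ c a₁ a₂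
    rw [hu₃a₁] at h4
    have e1 : (G.dist c a₂ : ℝ) ≤ (graphRad G : ℝ) := by exact_mod_cast distc a₂
    have e2 : (G.dist c a₁ : ℝ) ≤ (graphRad G : ℝ) := by exact_mod_cast distc a₁
    have emk : (m : ℝ) ≤ (k : ℝ) := by exact_mod_cast hmk
    have hsum : (m : ℝ) + (k : ℝ) = (D : ℝ) := by exact_mod_cast hu₃
    have hmax : max ((m : ℝ) + (G.dist c a₂ : ℝ)) ((k : ℝ) + (G.dist c a₁ : ℝ))
        ≤ (k : ℝ) + (graphRad G : ℝ) := by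
      apply max_le <;> linarith
    linarith
  -- pick v realizing ecc u₃
  obtain ⟨v, -, hv⟩ := Finset.exists_mem_eq_sup (Finset.univ (α := V))
    Finset.univ_nonempty (G.dist u₃)
  have hv' : (graphEcc G u₃ : ℝ) = (G.dist u₃ v : ℝ) := by
    rw [graphEcc, hv]
  rw [hv']
  have hsum : (m : ℝ) + (k : ℝ) = (D : ℝ) := by exact_mod_cast hu₃
  have hkr : (k : ℝ) ≤ (graphRad G : ℝ) := by exact_mod_cast hkrad
  -- triangle via center
  have tri : (G.dist u₃ v : ℝ) ≤ (G.dist u₃ c : ℝ) + (graphRad G : ℝ) := by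
    have t1 : G.dist u₃ v ≤ G.dist u₃ c + G.dist c v := hG.dist_triangle
    have t2 : (G.dist c v : ℝ) ≤ (graphRad G : ℝ) := by exact_mod_cast distc v
    have t1' : (G.dist u₃ v : ℝ) ≤ (G.dist u₃ c : ℝ) + (G.dist c v : ℝ) := by exact_mod_cast t1
    linarith
  -- App1
  have h4 := hyp u₃ v a₁ a₂
  rw [hu₃a₁] at h4
  have eva₁ : (G.dist v a₁ : ℝ) ≤ (D : ℝ) := by
    exact_mod_cast hD ▸ ha₂ ▸ (SimpleGraph.dist_comm (u := v) (v := a₁)) ▸ distLE a₁ v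
  have eva₂ : (G.dist v a₂ : ℝ) ≤ (D : ℝ) + 2 * δ := h1 v a₂
  rcases max_cases ((m : ℝ) + (G.dist v a₂ : ℝ)) ((k : ℝ) + (G.dist v a₁ : ℝ)) with ⟨he, -⟩ | ⟨he, -⟩ <;>
    rw [he] at h4
  · -- d u₃ v ≤ m + 4δ ; combine with app2 + tri
    linarith
  · -- d u₃ v ≤ k + 2δ ≤ rad + 2δ
    linarith
end

section
/- Let G be a finite connected chordal simple graph and let x be a vertex with e(x) = k > rad(G). Then there exists a vertex y with e(y) = k − 1 and d(x,y) ≤ 2. -/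
/-- `G` is chordal: it has no induced cycle of length at least 4
(equivalently, every induced cycle of length at least 4 has a chord). -/
def IsChordal {V : Type*} (G : SimpleGraph V) : Prop :=
  ∀ n : ℕ, 4 ≤ n → IsEmpty (SimpleGraph.cycleGraph n ↪g G)

namespace ChordalProof

open SimpleGraph

variable {V : Type*}

section Ecc
variable [Fintype V] (G : SimpleGraph V)

lemma dist_le_ecc (u v : V) : G.dist u v ≤ graphEcc G u :=
  Finset.le_sup (Finset.mem_univ v)

lemma ecc_le {u : V} {m : ℕ} (h : ∀ v : V, G.dist u v ≤ m) : graphEcc G u ≤ m :=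
  Finset.sup_le fun v _ => h v

lemma ecc_triangle (hG : G.Connected) (u v : V) :
    graphEcc G u ≤ G.dist u v + graphEcc G v :=
  ecc_le G fun w => (hG.dist_triangle (v := v)).trans (Nat.add_le_add_left (dist_le_ecc G v w) _)

lemma exists_center [Nonempty V] : ∃ c : V, graphEcc G c = graphRad G := by
  obtain ⟨c, _, hc⟩ := Finset.exists_mem_eq_inf' Finset.univ_nonempty (graphEcc G)
  exact ⟨c, hc.symm⟩

end Ecc

section WalkTools
variable {G : SimpleGraph V}

lemma exists_take {u v : V} (p : G.Walk u v) (i : ℕ) (hi : i ≤ p.length) :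
    ∃ q : G.Walk u (p.getVert i), q.length = i ∧ ∀ z ∈ q.support, z ∈ p.support := by
  induction p generalizing i with
  | nil =>
    have h0 : i = 0 := by simpa using hi
    subst h0
    exact ⟨Walk.nil, rfl, by simp⟩
  | cons h q ih =>
    cases i with
    | zero => exact ⟨Walk.nil, rfl, fun z hz => by
        change z ∈ [_] at hz; rw [List.mem_singleton] at hz; subst hz
        exact (Walk.cons h q).start_mem_support⟩
    | succ m =>
      have hm : m ≤ q.length := by
        simpa [Walk.length_cons, Nat.succ_le_succ_iff] using hi
      obtain ⟨r, hr1, hr2⟩ := ih m hm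
      refine ⟨Walk.cons h r, by simp [hr1], ?_⟩
      intro z hz
      change _ ∈ _ :: _ at hz ⊢
      rcases List.mem_cons.mp hz with h1 | h1
      · exact List.mem_cons.mpr (Or.inl h1)
      · exact List.mem_cons.mpr (Or.inr (hr2 z h1))

lemma exists_drop {u v : V} (p : G.Walk u v) (i : ℕ) (hi : i ≤ p.length) :
    ∃ q : G.Walk (p.getVert i) v, q.length + i = p.length ∧ ∀ z ∈ q.support, z ∈ p.support := by
  induction p generalizing i with
  | nil =>
    have h0 : i = 0 := by simpa using hi
    subst h0
    exact ⟨Walk.nil, rfl, by simp⟩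
  | cons h q ih =>
    cases i with
    | zero => exact ⟨Walk.cons h q, rfl, fun z hz => hz⟩
    | succ m =>
      have hm : m ≤ q.length := by
        simpa [Walk.length_cons, Nat.succ_le_succ_iff] using hi
      obtain ⟨r, hr1, hr2⟩ := ih m hm
      refine ⟨r, by show r.length + (m + 1) = q.length + 1; omega, ?_⟩
      intro z hz
      rw [Walk.support_cons]
      exact List.mem_cons.mpr (Or.inr (hr2 z hz))

lemma exists_min_walk (S : Set V) (y a : V)
    (h : ∃ p : G.Walk y a, ∀ z ∈ p.support, z ∈ S) :
    ∃ p : G.Walk y a, (∀ z ∈ p.support, z ∈ S) ∧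
      ∀ q : G.Walk y a, (∀ z ∈ q.support, z ∈ S) → p.length ≤ q.length := by
  classical
  obtain ⟨p0, hp0⟩ := h
  have hN : {n : ℕ | ∃ p : G.Walk y a, (∀ z ∈ p.support, z ∈ S) ∧ p.length = n}.Nonempty :=
    ⟨p0.length, p0, hp0, rfl⟩
  obtain ⟨p, hp, hlen⟩ := Nat.sInf_mem hN
  exact ⟨p, hp, fun q hq => hlen ▸ Nat.sInf_le ⟨q, hq, rfl⟩⟩

lemma split_walk (hG : G.Connected) (C : Set V) {s t : V} (p : G.Walk s t) :
    s ∉ C → t ∈ C →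
      ∃ a b, a ∉ C ∧ b ∈ C ∧ G.Adj a b ∧ G.dist s a + 1 + G.dist b t ≤ p.length := by
  induction p with
  | nil => intro hs ht; exact absurd ht hs
  | @cons s v t h q ih =>
    intro hs ht
    by_cases hv : v ∈ C
    · refine ⟨s, v, hs, hv, h, ?_⟩
      have h1 := SimpleGraph.dist_le q
      simp only [SimpleGraph.dist_self, Walk.length_cons]
      omega
    · obtain ⟨a, b, ha, hb, hab, hd⟩ := ih hv ht
      refine ⟨a, b, ha, hb, hab, ?_⟩
      have h1 : G.dist s a ≤ G.dist s v + G.dist v a := hG.dist_triangle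
      have h2 : G.dist s v = 1 := SimpleGraph.dist_eq_one_iff_adj.mpr h
      simp only [Walk.length_cons]
      omega

end WalkTools

section Cycle
variable {G : SimpleGraph V}

lemma mod_helper {n p q : ℕ} (hn : 2 ≤ n) (hp : p < n) (hq : q < n) :
    ((n - q + p) % n = 1 ↔ (p = q + 1 ∨ (p = 0 ∧ q + 1 = n))) := by
  rcases le_or_gt q p with h | h
  · have he : n - q + p = n + (p - q) := by omega
    rw [he, Nat.add_mod_left, Nat.mod_eq_of_lt (by omega : p - q < n)]
    omega
  · rw [Nat.mod_eq_of_lt (by omega : n - q + p < n)]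
    omega

lemma cycleAdj_iff {n : ℕ} (hn : 2 ≤ n) (u v : Fin n) :
    (cycleGraph n).Adj u v ↔
      (u.val = v.val + 1 ∨ v.val = u.val + 1 ∨ (u.val = 0 ∧ v.val + 1 = n) ∨
        (v.val = 0 ∧ u.val + 1 = n)) := by
  rw [cycleGraph_adj']
  have hA : (u - v).val = (n - v.val + u.val) % n := by simp [Fin.sub_def]
  have hB : (v - u).val = (n - u.val + v.val) % n := by simp [Fin.sub_def]
  rw [hA, hB, mod_helper hn u.isLt v.isLt, mod_helper hn v.isLt u.isLt]
  tauto

lemma cycle_embedding {n : ℕ} (hn : 4 ≤ n) (f : ℕ → V)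
    (h0 : f n = f 0)
    (hadj : ∀ i, i < n → G.Adj (f i) (f (i + 1)))
    (hinj : ∀ i j, i < j → j < n → f i ≠ f j)
    (hchord : ∀ i j, i < j → j < n → G.Adj (f i) (f j) → j = i + 1 ∨ (i = 0 ∧ j + 1 = n)) :
    Nonempty (cycleGraph n ↪g G) := by
  have hn2 : 2 ≤ n := by omega
  have key : ∀ (u v : Fin n), G.Adj (f u.val) (f v.val) ↔ (cycleGraph n).Adj u v := by
    intro u v
    rw [cycleAdj_iff hn2 u v]
    constructor
    · intro hadjf
      have hne : u.val ≠ v.val := by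
        intro he
        rw [he] at hadjf
        exact G.loopless.irrefl _ hadjf
      rcases lt_or_gt_of_ne hne with hlt | hgt
      · rcases hchord u.val v.val hlt v.isLt hadjf with h1 | h1
        · exact Or.inr (Or.inl h1)
        · exact Or.inr (Or.inr (Or.inl h1))
      · rcases hchord v.val u.val hgt u.isLt hadjf.symm with h1 | h1
        · exact Or.inl h1
        · exact Or.inr (Or.inr (Or.inr h1))
    · intro hcase
      rcases hcase with h1 | h1 | h1 | h1
      · exact (h1 ▸ hadj v.val v.isLt).symm
      · exact h1 ▸ hadj u.val u.isLt
      · have h2 : v.val = n - 1 := by omega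
        have h3 := hadj (n - 1) (by omega)
        rw [(by omega : n - 1 + 1 = n), h0] at h3
        rw [h1.1, h2]
        exact h3.symm
      · have h2 : u.val = n - 1 := by omega
        have h3 := hadj (n - 1) (by omega)
        rw [(by omega : n - 1 + 1 = n), h0] at h3
        rw [h1.1, h2]
        exact h3
  refine ⟨⟨⟨fun i => f i.val, ?_⟩, ?_⟩⟩
  · intro i j hij
    simp only at hij
    by_contra hne
    have hne' : i.val ≠ j.val := fun h => hne (Fin.ext h)
    rcases lt_or_gt_of_ne hne' with h | h
    · exact hinj i.val j.val h j.isLt hij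
    · exact hinj j.val i.val h i.isLt hij.symm
  · intro i j
    exact key i j

end Cycle

section Comp
variable {G : SimpleGraph V}

/-- The set of vertices at distance at least 3 from `x`. -/
def High (G : SimpleGraph V) (x : V) : Set V := {z | 3 ≤ G.dist x z}

/-- The connected component of `c` in the graph induced on `High G x`. -/
def Comp (G : SimpleGraph V) (x c : V) : Set V :=
  {u | ∃ p : G.Walk c u, ∀ z ∈ p.support, z ∈ High G x}

/-- Neighborhood of the component `Comp G x c` inside the sphere of radius 2. -/
def Kset (G : SimpleGraph V) (x c : V) : Set V :=
  {z | G.dist x z = 2 ∧ ∃ b ∈ Comp G x c, G.Adj z b}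

lemma comp_subset_high {x c u : V} (hu : u ∈ Comp G x c) : u ∈ High G x := by
  obtain ⟨p, hp⟩ := hu
  exact hp u p.end_mem_support

lemma comp_extend {x c u v : V} (hu : u ∈ Comp G x c) (huv : G.Adj u v)
    (hv : v ∈ High G x) : v ∈ Comp G x c := by
  obtain ⟨p, hp⟩ := hu
  refine ⟨p.concat huv, ?_⟩
  intro z hz
  rw [Walk.support_concat] at hz
  rcases List.mem_append.mp hz with h | h
  · exact hp z h
  · rw [List.mem_singleton] at h
    exact h ▸ hv

lemma adj_comp_mem_kset (hG : G.Connected) {x c a b : V} (ha : a ∉ Comp G x c)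
    (hb : b ∈ Comp G x c) (hab : G.Adj a b) : a ∈ Kset G x c := by
  have hb3 : 3 ≤ G.dist x b := comp_subset_high hb
  have h1 : G.dist x b ≤ G.dist x a + G.dist a b := hG.dist_triangle
  have h2 : G.dist a b = 1 := SimpleGraph.dist_eq_one_iff_adj.mpr hab
  have h3 : G.dist x a ≤ 2 := by
    by_contra h
    have hhigh : a ∈ High G x := by
      simp only [High, Set.mem_setOf_eq]
      omega
    exact ha (comp_extend hb hab.symm hhigh)
  exact ⟨by omega, b, hb, hab⟩

/-- The key chordality consequence: the neighborhood (in the sphere of radius 2 around `x`)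
of a connected component of the complement of the ball of radius 2 around `x` is a clique. -/
lemma kset_clique (hG : G.Connected) (hch : IsChordal G) (x c : V)
    {y a : V} (hy : y ∈ Kset G x c) (ha : a ∈ Kset G x c) (hne : y ≠ a) : G.Adj y a := by
  classical
  by_contra hnadj
  obtain ⟨hy2, by', hbyC, hyadj⟩ := hy
  obtain ⟨ha2, ba', hbaC, haadj⟩ := ha
  set SP : Set V := High G x ∪ {y, a} with hSPdef
  set SQ : Set V := {z : V | G.dist x z ≤ 1} ∪ {y, a} with hSQdef
  have hbyH : by' ∈ High G x := comp_subset_high hbyC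
  have hbaH : ba' ∈ High G x := comp_subset_high hbaC
  obtain ⟨w1, hw1⟩ := hbyC
  obtain ⟨w2, hw2⟩ := hbaC
  -- walk from y to a through the component
  have hPex : ∃ p : G.Walk y a, ∀ z ∈ p.support, z ∈ SP := by
    refine ⟨Walk.cons hyadj ((w1.reverse.append w2).append (Walk.cons haadj.symm Walk.nil)), ?_⟩
    intro z hz
    rw [Walk.support_cons] at hz
    rcases List.mem_cons.mp hz with rfl | hz
    · exact Or.inr (by simp)
    · rw [Walk.mem_support_append_iff] at hz
      rcases hz with hz | hz
      · rw [Walk.mem_support_append_iff] at hz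
        rcases hz with hz | hz
        · rw [Walk.support_reverse, List.mem_reverse] at hz
          exact Or.inl (hw1 z hz)
        · exact Or.inl (hw2 z hz)
      · rw [Walk.support_cons] at hz
        rcases List.mem_cons.mp hz with rfl | hz
        · exact Or.inl hbaH
        · rw [Walk.support_nil, List.mem_singleton] at hz
          exact Or.inr (by simp [hz])
  -- walk from y to a through the ball of radius 1
  have hyx : G.dist y x = 2 := by rw [SimpleGraph.dist_comm]; exact hy2
  have hax : G.dist a x = 2 := by rw [SimpleGraph.dist_comm]; exact ha2
  obtain ⟨p1, hp1len⟩ := hG.exists_walk_length_eq_dist y x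
  rw [hyx] at hp1len
  obtain ⟨p2, hp2len⟩ := hG.exists_walk_length_eq_dist a x
  rw [hax] at hp2len
  have hadjy : G.Adj y (p1.getVert 1) := by
    have h := p1.adj_getVert_succ (i := 0) (by omega)
    rwa [p1.getVert_zero] at h
  have hadjm1x : G.Adj (p1.getVert 1) x := by
    have h := p1.adj_getVert_succ (i := 1) (by omega)
    rwa [(by omega : (1 : ℕ) + 1 = p1.length), p1.getVert_length] at h
  have hadja : G.Adj a (p2.getVert 1) := by
    have h := p2.adj_getVert_succ (i := 0) (by omega)
    rwa [p2.getVert_zero] at h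
  have hadjm2x : G.Adj (p2.getVert 1) x := by
    have h := p2.adj_getVert_succ (i := 1) (by omega)
    rwa [(by omega : (1 : ℕ) + 1 = p2.length), p2.getVert_length] at h
  have hQex : ∃ q : G.Walk y a, ∀ z ∈ q.support, z ∈ SQ := by
    refine ⟨Walk.cons hadjy (Walk.cons hadjm1x (Walk.cons hadjm2x.symm
      (Walk.cons hadja.symm Walk.nil))), ?_⟩
    intro z hz
    simp only [Walk.support_cons, Walk.support_nil, List.mem_cons,
      List.mem_singleton, List.not_mem_nil, or_false] at hz
    rcases hz with rfl | rfl | rfl | rfl | rfl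
    · exact Or.inr (by simp)
    · exact Or.inl (le_of_eq (SimpleGraph.dist_eq_one_iff_adj.mpr hadjm1x.symm))
    · exact Or.inl (by simp only [Set.mem_setOf_eq, SimpleGraph.dist_self]; omega)
    · exact Or.inl (le_of_eq (SimpleGraph.dist_eq_one_iff_adj.mpr hadjm2x.symm))
    · exact Or.inr (by simp)
  obtain ⟨P, hPS, hPmin⟩ := exists_min_walk SP y a hPex
  obtain ⟨Q, hQS, hQmin⟩ := exists_min_walk SQ y a hQex
  have hdya : 2 ≤ G.dist y a := by
    have h0 : G.dist y a ≠ 0 := fun h => hne (hG.dist_eq_zero_iff.mp h)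
    have h1 : G.dist y a ≠ 1 := fun h => hnadj (SimpleGraph.dist_eq_one_iff_adj.mp h)
    omega
  have hLp2 : 2 ≤ P.length := le_trans hdya (SimpleGraph.dist_le P)
  have hLq2 : 2 ≤ Q.length := le_trans hdya (SimpleGraph.dist_le Q)
  have hPy : P.getVert 0 = y := P.getVert_zero
  have hPa : P.getVert P.length = a := P.getVert_length
  have hQy : Q.getVert 0 = y := Q.getVert_zero
  have hQa : Q.getVert Q.length = a := Q.getVert_length
  -- interior of P lies in High
  have hPint : ∀ i, 0 < i → i < P.length → 3 ≤ G.dist x (P.getVert i) := by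
    intro i h0i hiLp
    have hmem : P.getVert i ∈ P.support :=
      Walk.mem_support_iff_exists_getVert.mpr ⟨i, rfl, by omega⟩
    rcases hPS _ hmem with h | h
    · exact h
    · exfalso
      simp only [Set.mem_insert_iff, Set.mem_singleton_iff] at h
      rcases h with h | h
      · obtain ⟨q, hqlen, hqsup⟩ := exists_drop P i (by omega)
        have hmin := hPmin (q.copy h rfl) (by
          intro z hz
          rw [Walk.support_copy] at hz
          exact hPS z (hqsup z hz))
        rw [Walk.length_copy] at hmin
        omega
      · obtain ⟨q, hqlen, hqsup⟩ := exists_take P i (by omega)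
        have hmin := hPmin (q.copy rfl h) (by
          intro z hz
          rw [Walk.support_copy] at hz
          exact hPS z (hqsup z hz))
        rw [Walk.length_copy] at hmin
        omega
  -- interior of Q lies in the ball of radius 1
  have hQint : ∀ i, 0 < i → i < Q.length → G.dist x (Q.getVert i) ≤ 1 := by
    intro i h0i hiLq
    have hmem : Q.getVert i ∈ Q.support :=
      Walk.mem_support_iff_exists_getVert.mpr ⟨i, rfl, by omega⟩
    rcases hQS _ hmem with h | h
    · exact h
    · exfalso
      simp only [Set.mem_insert_iff, Set.mem_singleton_iff] at h
      rcases h with h | h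
      · obtain ⟨q, hqlen, hqsup⟩ := exists_drop Q i (by omega)
        have hmin := hQmin (q.copy h rfl) (by
          intro z hz
          rw [Walk.support_copy] at hz
          exact hQS z (hqsup z hz))
        rw [Walk.length_copy] at hmin
        omega
      · obtain ⟨q, hqlen, hqsup⟩ := exists_take Q i (by omega)
        have hmin := hQmin (q.copy rfl h) (by
          intro z hz
          rw [Walk.support_copy] at hz
          exact hQS z (hqsup z hz))
        rw [Walk.length_copy] at hmin
        omega
  set n := P.length + Q.length with hndef
  have hn4 : 4 ≤ n := by omega
  set f : ℕ → V := fun i => if i ≤ P.length then P.getVert i else Q.getVert (n - i) with hfdef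
  have hfP : ∀ i, i ≤ P.length → f i = P.getVert i := by
    intro i h
    simp only [hfdef]
    rw [if_pos h]
  have hfQ : ∀ i, P.length ≤ i → f i = Q.getVert (n - i) := by
    intro i h
    rcases h.eq_or_lt with heq | h'
    · rw [← heq, hfP P.length le_rfl, hPa, (by omega : n - P.length = Q.length), hQa]
    · simp only [hfdef]
      rw [if_neg (by omega)]
  have hf0 : f 0 = y := by rw [hfP 0 (by omega), hPy]
  have hfn : f n = f 0 := by
    rw [hfQ n (by omega), Nat.sub_self, hQy, hf0]
  have hadjf : ∀ i, i < n → G.Adj (f i) (f (i + 1)) := by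
    intro i hi
    by_cases hiLp : i + 1 ≤ P.length
    · rw [hfP i (by omega), hfP (i + 1) hiLp]
      exact P.adj_getVert_succ (by omega)
    · have hiLp' : P.length ≤ i := by omega
      rw [hfQ i hiLp', hfQ (i + 1) (by omega)]
      have h := Q.adj_getVert_succ (i := n - i - 1) (by omega)
      rw [(by omega : n - i - 1 + 1 = n - i)] at h
      rw [(by omega : n - (i + 1) = n - i - 1)]
      exact h.symm
  have hinjf : ∀ i j, i < j → j < n → f i ≠ f j := by
    intro i j hij hjn heq
    by_cases hj : j ≤ P.length
    · rw [hfP i (by omega), hfP j hj] at heq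
      obtain ⟨q1, hq1len, hq1sup⟩ := exists_take P i (by omega)
      obtain ⟨q2, hq2len, hq2sup⟩ := exists_drop P j hj
      have hmin := hPmin (q1.append (q2.copy heq.symm rfl)) (by
        intro z hz
        rw [Walk.mem_support_append_iff] at hz
        rcases hz with hz | hz
        · exact hPS z (hq1sup z hz)
        · rw [Walk.support_copy] at hz
          exact hPS z (hq2sup z hz))
      rw [Walk.length_append, Walk.length_copy] at hmin
      omega
    · by_cases hi : P.length ≤ i
      · rw [hfQ i hi, hfQ j (by omega)] at heq
        obtain ⟨q1, hq1len, hq1sup⟩ := exists_take Q (n - j) (by omega)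
        obtain ⟨q2, hq2len, hq2sup⟩ := exists_drop Q (n - i) (by omega)
        have hmin := hQmin (q1.append (q2.copy heq rfl)) (by
          intro z hz
          rw [Walk.mem_support_append_iff] at hz
          rcases hz with hz | hz
          · exact hQS z (hq1sup z hz)
          · rw [Walk.support_copy] at hz
            exact hQS z (hq2sup z hz))
        rw [Walk.length_append, Walk.length_copy] at hmin
        omega
      · have hdj : G.dist x (f j) ≤ 1 := by
          rw [hfQ j (by omega)]
          exact hQint (n - j) (by omega) (by omega)
        have hdi : 2 ≤ G.dist x (f i) := by
          rcases Nat.eq_zero_or_pos i with rfl | hpos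
          · rw [hf0, hy2]
          · rw [hfP i (by omega)]
            have h := hPint i hpos (by omega)
            omega
        rw [heq] at hdi
        omega
  have hchordf : ∀ i j, i < j → j < n → G.Adj (f i) (f j) →
      j = i + 1 ∨ (i = 0 ∧ j + 1 = n) := by
    intro i j hij hjn hadjij
    by_cases hj : j ≤ P.length
    · left
      by_contra hne2
      rw [hfP i (by omega), hfP j hj] at hadjij
      obtain ⟨q1, hq1len, hq1sup⟩ := exists_take P i (by omega)
      obtain ⟨q2, hq2len, hq2sup⟩ := exists_drop P j hj
      have hmin := hPmin (q1.append (Walk.cons hadjij q2)) (by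
        intro z hz
        rw [Walk.mem_support_append_iff] at hz
        rcases hz with hz | hz
        · exact hPS z (hq1sup z hz)
        · rw [Walk.support_cons] at hz
          rcases List.mem_cons.mp hz with rfl | hz
          · exact hPS _ (Walk.mem_support_iff_exists_getVert.mpr ⟨i, rfl, by omega⟩)
          · exact hPS z (hq2sup z hz))
      rw [Walk.length_append, Walk.length_cons] at hmin
      omega
    · by_cases hi : P.length ≤ i
      · left
        by_contra hne2
        rw [hfQ i hi, hfQ j (by omega)] at hadjij
        obtain ⟨q1, hq1len, hq1sup⟩ := exists_take Q (n - j) (by omega)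
        obtain ⟨q2, hq2len, hq2sup⟩ := exists_drop Q (n - i) (by omega)
        have hmin := hQmin (q1.append (Walk.cons hadjij.symm q2)) (by
          intro z hz
          rw [Walk.mem_support_append_iff] at hz
          rcases hz with hz | hz
          · exact hQS z (hq1sup z hz)
          · rw [Walk.support_cons] at hz
            rcases List.mem_cons.mp hz with rfl | hz
            · exact hQS _ (Walk.mem_support_iff_exists_getVert.mpr ⟨n - j, rfl, by omega⟩)
            · exact hQS z (hq2sup z hz))
        rw [Walk.length_append, Walk.length_cons] at hmin
        omega
      · rcases Nat.eq_zero_or_pos i with rfl | hpos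
        · right
          refine ⟨rfl, ?_⟩
          by_contra hne2
          rw [hf0] at hadjij
          rw [hfQ j (by omega)] at hadjij
          obtain ⟨q2, hq2len, hq2sup⟩ := exists_drop Q (n - j) (by omega)
          have hmin := hQmin (Walk.cons hadjij q2) (by
            intro z hz
            rw [Walk.support_cons] at hz
            rcases List.mem_cons.mp hz with rfl | hz
            · exact Or.inr (by simp)
            · exact hQS z (hq2sup z hz))
          rw [Walk.length_cons] at hmin
          omega
        · exfalso
          have hdi : 3 ≤ G.dist x (f i) := by
            rw [hfP i (by omega)]
            exact hPint i hpos (by omega)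
          have hdj : G.dist x (f j) ≤ 1 := by
            rw [hfQ j (by omega)]
            exact hQint (n - j) (by omega) (by omega)
          have h1 : G.dist (f j) (f i) = 1 := SimpleGraph.dist_eq_one_iff_adj.mpr hadjij.symm
          have h2 : G.dist x (f i) ≤ G.dist x (f j) + G.dist (f j) (f i) := hG.dist_triangle
          omega
  obtain ⟨e⟩ := cycle_embedding hn4 f hfn hadjf hinjf hchordf
  exact (hch n hn4).false e

end Comp

end ChordalProof

theorem chordal_ecc_decrease_within_two {V : Type*} [Fintype V] [Nonempty V]
    (G : SimpleGraph V) (hG : G.Connected) (hchordal : IsChordal G)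
    (x : V) (k : ℕ) (hk : graphEcc G x = k) (hgt : k > graphRad G) :
    ∃ y : V, graphEcc G y = k - 1 ∧ G.dist x y ≤ 2 := by
  classical
  open SimpleGraph ChordalProof in
  obtain ⟨c, hc⟩ := ChordalProof.exists_center G
  have hck : graphEcc G c < k := by rw [hc]; exact hgt
  have hxu : ∀ u : V, G.dist x u ≤ k := fun u => hk ▸ ChordalProof.dist_le_ecc G x u
  have hcu : ∀ u : V, G.dist c u ≤ graphEcc G c := fun u => ChordalProof.dist_le_ecc G c u
  have hk1 : 1 ≤ k := by omega
  -- Step 1: find y₀ within distance 2 with strictly smaller eccentricity.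
  have hstep : ∃ y0 : V, G.dist x y0 ≤ 2 ∧ graphEcc G y0 < k := by
    by_cases hxc : G.dist x c ≤ 2
    · exact ⟨c, hxc, hck⟩
    · have hxc3 : 3 ≤ G.dist x c := by omega
      have hcC : c ∈ ChordalProof.Comp G x c := by
        refine ⟨SimpleGraph.Walk.nil, ?_⟩
        intro z hz
        rw [SimpleGraph.Walk.support_nil, List.mem_singleton] at hz
        subst hz
        exact hxc3
      have hxC : x ∉ ChordalProof.Comp G x c := by
        intro h
        have h2 := ChordalProof.comp_subset_high h
        simp only [ChordalProof.High, Set.mem_setOf_eq, SimpleGraph.dist_self] at h2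
        omega
      obtain ⟨pxc⟩ := hG.preconnected x c
      obtain ⟨y, b0, hy0, hb0, hab0, _⟩ :=
        ChordalProof.split_walk hG (ChordalProof.Comp G x c) pxc hxC hcC
      have hyK := ChordalProof.adj_comp_mem_kset hG hy0 hb0 hab0
      have hy2 : G.dist x y = 2 := hyK.1
      refine ⟨y, by omega, ?_⟩
      have hecc : ∀ w : V, G.dist y w + 1 ≤ k := by
        intro w
        by_cases hw : w ∈ ChordalProof.Comp G x c
        · obtain ⟨pw, hpwlen⟩ := hG.exists_walk_length_eq_dist x w
          obtain ⟨a1, b1, ha1, hb1, hab1, hd1⟩ :=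
            ChordalProof.split_walk hG (ChordalProof.Comp G x c) pw hxC hw
          rw [hpwlen] at hd1
          have ha1K := ChordalProof.adj_comp_mem_kset hG ha1 hb1 hab1
          have hya1 : G.dist y a1 ≤ 1 := by
            by_cases hya : y = a1
            · rw [hya, SimpleGraph.dist_self]; omega
            · exact le_of_eq (SimpleGraph.dist_eq_one_iff_adj.mpr
                (ChordalProof.kset_clique hG hchordal x c hyK ha1K hya))
          have t1 : G.dist y w ≤ G.dist y a1 + G.dist a1 w := hG.dist_triangle
          have t2 : G.dist a1 w ≤ G.dist a1 b1 + G.dist b1 w := hG.dist_triangle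
          have t3 : G.dist a1 b1 = 1 := SimpleGraph.dist_eq_one_iff_adj.mpr hab1
          have t4 : G.dist x w ≤ k := hxu w
          have t5 : G.dist x a1 = 2 := ha1K.1
          omega
        · obtain ⟨pw, hpwlen⟩ := hG.exists_walk_length_eq_dist w c
          obtain ⟨a1, b1, ha1, hb1, hab1, hd1⟩ :=
            ChordalProof.split_walk hG (ChordalProof.Comp G x c) pw hw hcC
          rw [hpwlen] at hd1
          have ha1K := ChordalProof.adj_comp_mem_kset hG ha1 hb1 hab1
          have hya1 : G.dist y a1 ≤ 1 := by
            by_cases hya : y = a1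
            · rw [hya, SimpleGraph.dist_self]; omega
            · exact le_of_eq (SimpleGraph.dist_eq_one_iff_adj.mpr
                (ChordalProof.kset_clique hG hchordal x c hyK ha1K hya))
          have t1 : G.dist y w ≤ G.dist y a1 + G.dist a1 w := hG.dist_triangle
          have t2 : G.dist a1 w = G.dist w a1 := SimpleGraph.dist_comm
          have t3 : G.dist w c = G.dist c w := SimpleGraph.dist_comm
          have t4 : G.dist c w ≤ graphEcc G c := hcu w
          omega
      have heccy : graphEcc G y ≤ k - 1 :=
        ChordalProof.ecc_le G (fun w => by have := hecc w; omega)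
      omega
  -- Step 2: upgrade to eccentricity exactly `k - 1`.
  obtain ⟨y0, hy0d, hy0e⟩ := hstep
  have hlow : k ≤ G.dist x y0 + graphEcc G y0 := hk ▸ ChordalProof.ecc_triangle G hG x y0
  by_cases hcase : graphEcc G y0 = k - 1
  · exact ⟨y0, hcase, hy0d⟩
  · have hd2 : G.dist x y0 = 2 := by omega
    obtain ⟨p, hplen⟩ := hG.exists_walk_length_eq_dist x y0
    rw [hd2] at hplen
    have hadj1 : G.Adj x (p.getVert 1) := by
      have h := p.adj_getVert_succ (i := 0) (by omega)
      rwa [p.getVert_zero] at h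
    have hadj2 : G.Adj (p.getVert 1) y0 := by
      have h := p.adj_getVert_succ (i := 1) (by omega)
      rwa [(by omega : (1 : ℕ) + 1 = p.length), p.getVert_length] at h
    have hup : graphEcc G (p.getVert 1) ≤ G.dist (p.getVert 1) y0 + graphEcc G y0 :=
      ChordalProof.ecc_triangle G hG _ _
    have hdn : k ≤ G.dist x (p.getVert 1) + graphEcc G (p.getVert 1) :=
      hk ▸ ChordalProof.ecc_triangle G hG x _
    have hxm : G.dist x (p.getVert 1) = 1 := SimpleGraph.dist_eq_one_iff_adj.mpr hadj1
    have hmy : G.dist (p.getVert 1) y0 = 1 := SimpleGraph.dist_eq_one_iff_adj.mpr hadj2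
    exact ⟨p.getVert 1, by omega, by omega⟩
end
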